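/- Any n-1 of the vectors H_i - (2/n)·𝟏 (for i in a fixed set of n-1 indices among {1,...,n}) are linearly independent over R, where H_i ∈ R^(n choose 2) has {a,b}-entry 1 iff i ∈ {a,b} and 𝟏 is the all-ones vector. -/

import Mathlib

/-- Edges of `K_n`: unordered pairs of vertices, represented as ordered pairs `(a,b)`, `a < b`. -/
def PairIdx (n : ℕ) := {p : Fin n × Fin n // p.1 < p.2}

instance (n : ℕ) : Fintype (PairIdx n) := by unfold PairIdx; infer_instance
instance (n : ℕ) : DecidableEq (PairIdx n) := by unfold PairIdx; infer_instance

/-- `H_i := H({i})`: the indicator vector of the edges incident to vertex `i`. -/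
def Hv (n : ℕ) (i : Fin n) : PairIdx n → ℝ := fun p =>
  if p.val.1 = i ∨ p.val.2 = i then 1 else 0

/-- Any `n-1` of the vectors `H_i - (2/n)·𝟏` are linearly independent over `ℝ`. -/
theorem stmt14 (n : ℕ) (hn : 3 ≤ n) (S : Finset (Fin n)) (hS : S.card = n - 1) :
    LinearIndependent ℝ
      (fun i : S => Hv n i - (2 / (n : ℝ)) • (fun _ : PairIdx n => (1 : ℝ))) := by
  have hn0 : (n : ℝ) ≠ 0 := by positivity
  rw [Fintype.linearIndependent_iff]
  intro g hg
  have hcompl : Sᶜ.card = 1 := by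
    rw [Finset.card_compl, hS, Fintype.card_fin]; omega
  obtain ⟨v, hv⟩ := Finset.card_eq_one.mp hcompl
  have hvS : v ∉ S := by
    have : v ∈ Sᶜ := hv ▸ Finset.mem_singleton_self v
    simpa using this
  set T := ∑ i : S, g i with hT
  have key : ∀ i : S, g i = (2 / n) * T := by
    intro i
    have hiv : (i : Fin n) ≠ v := fun h => hvS (h ▸ i.2)
    -- build the edge {i, v}
    set p : PairIdx n :=
      if h : (i : Fin n) < v then ⟨((i : Fin n), v), h⟩
      else ⟨(v, (i : Fin n)), lt_of_le_of_ne (not_lt.mp h) (Ne.symm hiv)⟩ with hp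
    have hpval : ∀ j : S, Hv n (j : Fin n) p = if j = i then 1 else 0 := by
      intro j
      have hjv : (j : Fin n) ≠ v := fun h => hvS (h ▸ j.2)
      by_cases hji : j = i
      · subst hji
        simp only [Hv, hp]
        by_cases h : (j : Fin n) < v <;> simp [h]
      · have hji' : (j : Fin n) ≠ (i : Fin n) := fun h => hji (Subtype.ext h)
        simp only [Hv, hp]
        by_cases h : (i : Fin n) < v <;> simp [h, hji, hji'.symm, hjv.symm]
    have := congrFun hg p
    simp only [Finset.sum_apply, Pi.smul_apply, Pi.sub_apply, Pi.zero_apply,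
      smul_eq_mul] at this
    have hsum : ∑ j : S, g j * (Hv n (j : Fin n) p - 2 / n * 1) = 0 := this
    have hsum2 : (∑ j : S, g j * Hv n (j : Fin n) p) - (2 / n) * T = 0 := by
      rw [hT, Finset.mul_sum, ← Finset.sum_sub_distrib]
      rw [← hsum]
      congr 1; ext j; ring
    have hsel : ∑ j : S, g j * Hv n (j : Fin n) p = g i := by
      rw [Finset.sum_congr rfl (fun j _ => by rw [hpval j])]
      simp
    rw [hsel] at hsum2
    linarith
  have hTsum : T = (n - 1 : ℝ) * ((2 / n) * T) := by
    conv_lhs => rw [hT, Finset.sum_congr rfl (fun i _ => key i)]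
    simp only [Finset.sum_const, nsmul_eq_mul]
    have : (Fintype.card S : ℝ) = (n : ℝ) - 1 := by
      rw [Fintype.card_coe, hS]
      have : 1 ≤ n := by omega
      push_cast [Nat.cast_sub this]
      ring
    rw [Finset.card_univ, this]
  have hT0 : T = 0 := by
    have h3 : (3 : ℝ) ≤ (n : ℝ) := by exact_mod_cast hn
    have : T * ((n : ℝ) - 2 * ((n : ℝ) - 1)) = 0 := by
      field_simp at hTsum
      nlinarith [hTsum]
    have hne : (n : ℝ) - 2 * ((n : ℝ) - 1) ≠ 0 := by nlinarith
    exact (mul_eq_zero.mp this).resolve_right hne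
  intro i
  rw [key i, hT0, mul_zero]
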